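/- Let α > 0, ν := ⌈α⌉ − 1, and let f ∈ C^ν[−1,1] satisfy sup_{t>0} t^(ν−α)·ω₂(f^(ν), t; [−1,1]) =: |f|_α < ∞ with α ∉ ℕ. Let L be a polynomial of degree at most ν+1 such that L^(ν) interpolates f^(ν) at −1 and 1, and set g := f − L. Then ω₁(g^(ν), t; [−1,1]) ≤ c(α)·t^(α−ν)·|f|_α for all 0 < t ≤ 2. -/

import Mathlib

open Set

/-- The `k`-th modulus of smoothness of `f` on `[a,b]`. -/
noncomputable def wmod (k : ℕ) (f : ℝ → ℝ) (t a b : ℝ) : ℝ :=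
  sSup {v : ℝ | ∃ u x : ℝ, 0 < u ∧ u ≤ t ∧ a ≤ x - k * u / 2 ∧ x + k * u / 2 ≤ b ∧
    v = |∑ i ∈ Finset.range (k + 1),
          (-1 : ℝ) ^ i * (k.choose i : ℝ) * f (x + ((k : ℝ) / 2 - i) * u)|}

/-- The normalized first-difference set. -/
def S1set (f : ℝ → ℝ) (t : ℝ) : Set ℝ :=
  {v : ℝ | ∃ u x : ℝ, 0 < u ∧ u ≤ t ∧ -1 ≤ x - u / 2 ∧ x + u / 2 ≤ 1 ∧
    v = |f (x + u / 2) - f (x - u / 2)|}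

/-- The normalized second-difference set. -/
def S2set (f : ℝ → ℝ) (t : ℝ) : Set ℝ :=
  {v : ℝ | ∃ u x : ℝ, 0 < u ∧ u ≤ t ∧ -1 ≤ x - u ∧ x + u ≤ 1 ∧
    v = |f (x + u) - 2 * f x + f (x - u)|}

lemma wmod_one_eq (f : ℝ → ℝ) (t : ℝ) : wmod 1 f t (-1) 1 = sSup (S1set f t) := by
  unfold wmod S1set
  congr 1
  ext v
  constructor
  · rintro ⟨u, x, h1, h2, h3, h4, h5⟩
    refine ⟨u, x, h1, h2, by push_cast at h3; linarith, by push_cast at h4; linarith, ?_⟩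
    rw [h5]
    congr 1
    simp [Finset.sum_range_succ]
    ring_nf
  · rintro ⟨u, x, h1, h2, h3, h4, h5⟩
    refine ⟨u, x, h1, h2, by push_cast; linarith, by push_cast; linarith, ?_⟩
    rw [h5]
    congr 1
    simp [Finset.sum_range_succ]
    ring_nf

lemma wmod_two_eq (f : ℝ → ℝ) (t : ℝ) : wmod 2 f t (-1) 1 = sSup (S2set f t) := by
  unfold wmod S2set
  congr 1
  ext v
  constructor
  · rintro ⟨u, x, h1, h2, h3, h4, h5⟩
    refine ⟨u, x, h1, h2, by push_cast at h3; linarith, by push_cast at h4; linarith, ?_⟩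
    rw [h5]
    congr 1
    simp [Finset.sum_range_succ]
    ring_nf
  · rintro ⟨u, x, h1, h2, h3, h4, h5⟩
    refine ⟨u, x, h1, h2, by push_cast; linarith, by push_cast; linarith, ?_⟩
    rw [h5]
    congr 1
    simp [Finset.sum_range_succ]
    ring_nf

lemma S1bdd {f : ℝ → ℝ} {M : ℝ} (hM : ∀ y ∈ Icc (-1:ℝ) 1, |f y| ≤ M) (t : ℝ) :
    BddAbove (S1set f t) := by
  refine ⟨2*M, ?_⟩
  rintro v ⟨u, x, h1, h2, h3, h4, rfl⟩
  have ha := hM (x - u/2) ⟨h3, by linarith⟩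
  have hb := hM (x + u/2) ⟨by linarith, h4⟩
  have := abs_sub (f (x + u/2)) (f (x - u/2))
  linarith

lemma S2bdd {f : ℝ → ℝ} {M : ℝ} (hM : ∀ y ∈ Icc (-1:ℝ) 1, |f y| ≤ M) (t : ℝ) :
    BddAbove (S2set f t) := by
  refine ⟨4*M, ?_⟩
  rintro v ⟨u, x, h1, h2, h3, h4, rfl⟩
  have ha := hM (x - u) ⟨h3, by linarith⟩
  have hm := hM x ⟨by linarith, by linarith⟩
  have hb := hM (x + u) ⟨by linarith, h4⟩
  have h5 := abs_add_le (f (x + u) - 2 * f x) (f (x - u))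
  have h6 := abs_sub (f (x + u)) (2 * f x)
  have h7 : |2 * f x| = 2 * |f x| := by rw [abs_mul]; norm_num
  linarith

lemma sSup_S1_nonneg {f : ℝ → ℝ} {M : ℝ} (hM : ∀ y ∈ Icc (-1:ℝ) 1, |f y| ≤ M)
    {t : ℝ} (ht : 0 < t) : 0 ≤ sSup (S1set f t) := by
  have hu0 : 0 < min t 2 := lt_min ht (by norm_num)
  have hu2 : min t 2 ≤ 2 := min_le_right _ _
  have hmem : |f ((0:ℝ) + min t 2 / 2) - f (0 - min t 2 / 2)| ∈ S1set f t :=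
    ⟨min t 2, 0, hu0, min_le_left _ _, by linarith, by linarith, rfl⟩
  exact le_trans (abs_nonneg _) (le_csSup (S1bdd hM t) hmem)

lemma sSup_S1_le {f : ℝ → ℝ} {M : ℝ} (hM : ∀ y ∈ Icc (-1:ℝ) 1, |f y| ≤ M)
    (hM0 : 0 ≤ M) (t : ℝ) : sSup (S1set f t) ≤ 2 * M := by
  refine Real.sSup_le ?_ (by linarith)
  rintro v ⟨u, x, h1, h2, h3, h4, rfl⟩
  have ha := hM (x - u/2) ⟨h3, by linarith⟩
  have hb := hM (x + u/2) ⟨by linarith, h4⟩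
  have := abs_sub (f (x + u/2)) (f (x - u/2))
  linarith

/-- `‖f‖ ≤ ω₂(f,1)` for `f` vanishing at the endpoints. -/
lemma max_le_of_vanish {f : ℝ → ℝ} {M x₀ B : ℝ} (hx₀ : x₀ ∈ Icc (-1:ℝ) 1)
    (hMdef : M = |f x₀|) (hM : ∀ y ∈ Icc (-1:ℝ) 1, |f y| ≤ M)
    (hm1 : f (-1) = 0) (hp1 : f 1 = 0) (hB0 : 0 ≤ B)
    (hend : ∀ v ∈ S2set f 1, v ≤ B) : M ≤ B := by
  rcases le_or_gt x₀ 0 with hx0 | hx0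
  · rcases eq_or_lt_of_le hx₀.1 with heq | hlt
    · rw [hMdef, ← heq, hm1]; simpa using hB0
    · have hu0 : 0 < x₀ + 1 := by linarith
      have hBb := hend (|f (x₀ + (x₀+1)) - 2 * f x₀ + f (x₀ - (x₀+1))|)
        ⟨x₀+1, x₀, hu0, by linarith, by linarith, by linarith, rfl⟩
      have hz : f (x₀ - (x₀+1)) = 0 := by rw [show x₀ - (x₀+1) = -1 by ring, hm1]
      have hin := hM (x₀ + (x₀+1)) ⟨by linarith, by linarith⟩
      have h5 := abs_sub_abs_le_abs_sub (2 * f x₀) (f (x₀ + (x₀+1)))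
      have h6 : |2 * f x₀| = 2 * M := by rw [abs_mul, hMdef]; norm_num
      have h7 : |2 * f x₀ - f (x₀ + (x₀+1))| = |f (x₀ + (x₀+1)) - 2 * f x₀ + f (x₀ - (x₀+1))| := by
        rw [hz, abs_sub_comm]; ring_nf
      linarith
  · rcases eq_or_lt_of_le hx₀.2 with heq | hlt
    · rw [hMdef, heq, hp1]; simpa using hB0
    · have hu0 : 0 < 1 - x₀ := by linarith
      have hBb := hend (|f (x₀ + (1-x₀)) - 2 * f x₀ + f (x₀ - (1-x₀))|)
        ⟨1-x₀, x₀, hu0, by linarith, by linarith, by linarith, rfl⟩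
      have hz : f (x₀ + (1-x₀)) = 0 := by rw [show x₀ + (1-x₀) = 1 by ring, hp1]
      have hin := hM (x₀ - (1-x₀)) ⟨by linarith, by linarith⟩
      have h5 := abs_sub_abs_le_abs_sub (2 * f x₀) (f (x₀ - (1-x₀)))
      have h6 : |2 * f x₀| = 2 * M := by rw [abs_mul, hMdef]; norm_num
      have h7 : |2 * f x₀ - f (x₀ - (1-x₀))| = |f (x₀ + (1-x₀)) - 2 * f x₀ + f (x₀ - (1-x₀))| := by
        rw [hz, abs_sub_comm]; ring_nf
      linarith

/-- Marchaud-type recursion step: `ω₁(t) ≤ ½ω₁(2t) + ½ω₂(t)` for `t ≤ 2/3`. -/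
lemma marchaud_step {f : ℝ → ℝ} {M W2t : ℝ} (hM : ∀ y ∈ Icc (-1:ℝ) 1, |f y| ≤ M)
    {t : ℝ} (ht : 0 < t) (ht23 : t ≤ 2/3)
    (hW2 : ∀ v ∈ S2set f t, v ≤ W2t) (hW2t0 : 0 ≤ W2t) :
    sSup (S1set f t) ≤ (1/2) * sSup (S1set f (2*t)) + (1/2) * W2t := by
  have hnn := sSup_S1_nonneg hM (show (0:ℝ) < 2*t by linarith)
  refine Real.sSup_le ?_ (by linarith)
  rintro v ⟨u, x, h1, h2, h3, h4, rfl⟩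
  by_cases hcase : x + u/2 + u ≤ 1
  · have hmem1 : |f ((x + u/2) + 2*u/2) - f ((x + u/2) - 2*u/2)| ∈ S1set f (2*t) :=
      ⟨2*u, x + u/2, by linarith, by linarith, by linarith, by linarith, rfl⟩
    have hle1 := le_csSup (S1bdd hM (2*t)) hmem1
    have hle2 := hW2 (|f ((x + u/2) + u) - 2 * f (x + u/2) + f ((x + u/2) - u)|)
      ⟨u, x + u/2, h1, h2, by linarith, by linarith, rfl⟩
    rw [show (x + u/2) + 2*u/2 = x + u/2 + u by ring,
      show (x + u/2) - 2*u/2 = x - u/2 by ring] at hle1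
    rw [show (x + u/2) + u = x + u/2 + u by ring,
      show (x + u/2) - u = x - u/2 by ring] at hle2
    have hid : |2*(f (x + u/2) - f (x - u/2))|
        = |(f (x + u/2 + u) - f (x - u/2)) - (f (x + u/2 + u) - 2*f (x + u/2) + f (x - u/2))| := by
      congr 1; ring
    have habs1 := abs_sub (f (x + u/2 + u) - f (x - u/2))
      (f (x + u/2 + u) - 2*f (x + u/2) + f (x - u/2))
    have habs2 : |2*(f (x + u/2) - f (x - u/2))| = 2 * |f (x + u/2) - f (x - u/2)| := by
      rw [abs_mul]; norm_num
    rw [hid] at habs2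
    linarith
  · push_neg at hcase
    have hleft : -1 ≤ x - u/2 - u := by nlinarith
    have hmem1 : |f ((x - u/2) + 2*u/2) - f ((x - u/2) - 2*u/2)| ∈ S1set f (2*t) :=
      ⟨2*u, x - u/2, by linarith, by linarith, by linarith, by linarith, rfl⟩
    have hle1 := le_csSup (S1bdd hM (2*t)) hmem1
    have hle2 := hW2 (|f ((x - u/2) + u) - 2 * f (x - u/2) + f ((x - u/2) - u)|)
      ⟨u, x - u/2, h1, h2, by linarith, by linarith, rfl⟩
    rw [show (x - u/2) + 2*u/2 = x + u/2 by ring,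
      show (x - u/2) - 2*u/2 = x - u/2 - u by ring] at hle1
    rw [show (x - u/2) + u = x + u/2 by ring,
      show (x - u/2) - u = x - u/2 - u by ring] at hle2
    have hid : |2*(f (x + u/2) - f (x - u/2))|
        = |(f (x + u/2) - f (x - u/2 - u)) + (f (x + u/2) - 2*f (x - u/2) + f (x - u/2 - u))| := by
      congr 1; ring
    have habs1 := abs_add_le (f (x + u/2) - f (x - u/2 - u))
      (f (x + u/2) - 2*f (x - u/2) + f (x - u/2 - u))
    have habs2 : |2*(f (x + u/2) - f (x - u/2))| = 2 * |f (x + u/2) - f (x - u/2)| := by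
      rw [abs_mul]; norm_num
    rw [hid] at habs2
    linarith

/-- The constant in the Marchaud inequality. -/
noncomputable def Cconst (β : ℝ) : ℝ := 3 + 1/(2*(1 - (2:ℝ)^(β-1)))

lemma Cconst_ge_three {β : ℝ} (hβ1 : β < 1) : 3 ≤ Cconst β := by
  have h2β : (2:ℝ)^(β-1) < 1 := Real.rpow_lt_one_of_one_lt_of_neg one_lt_two (by linarith)
  have hD0 : (0:ℝ) < 1 - 2^(β-1) := by linarith
  have h1 : (0:ℝ) < 1/(2*(1 - (2:ℝ)^(β-1))) := one_div_pos.mpr (by linarith)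
  unfold Cconst
  linarith

/-- The core Marchaud-type estimate on `[-1,1]`. -/
lemma marchaud_main {β B : ℝ} (hβ0 : 0 < β) (hβ1 : β < 1) (h : ℝ → ℝ)
    (hcont : ContinuousOn h (Icc (-1:ℝ) 1)) (hm1 : h (-1) = 0) (hp1 : h 1 = 0)
    (hw2 : ∀ t : ℝ, 0 < t → sSup (S2set h t) ≤ B * t ^ β) :
    ∀ t : ℝ, 0 < t → t ≤ 2 → sSup (S1set h t) ≤ Cconst β * t ^ β * B := by
  have h2β : (2:ℝ)^(β-1) < 1 := Real.rpow_lt_one_of_one_lt_of_neg one_lt_two (by linarith)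
  have h2β0 : 0 < (2:ℝ)^(β-1) := Real.rpow_pos_of_pos two_pos _
  have hD0 : 0 < 1 - (2:ℝ)^(β-1) := by linarith
  have hC3 : 3 ≤ Cconst β := Cconst_ge_three hβ1
  have hCkey : Cconst β * (2:ℝ)^(β-1) + 1/2 ≤ Cconst β := by
    have hCD : Cconst β * (1 - (2:ℝ)^(β-1)) = 3*(1 - (2:ℝ)^(β-1)) + 1/2 := by
      unfold Cconst; field_simp
    nlinarith
  -- max of |h|
  obtain ⟨x₀, hx₀s, hmax⟩ := isCompact_Icc.exists_isMaxOn
    (⟨-1, by norm_num, by norm_num⟩ : (Icc (-1:ℝ) 1).Nonempty) hcont.abs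
  have hMb : ∀ y ∈ Icc (-1:ℝ) 1, |h y| ≤ |h x₀| := fun y hy => hmax hy
  have hM0 : 0 ≤ |h x₀| := abs_nonneg _
  -- B ≥ 0
  have hB0 : 0 ≤ B := by
    have hmem : |h ((0:ℝ) + 1/2) - 2 * h 0 + h (0 - 1/2)| ∈ S2set h 1 :=
      ⟨1/2, 0, by norm_num, by norm_num, by norm_num, by norm_num, rfl⟩
    have h1 : (0:ℝ) ≤ sSup (S2set h 1) := le_trans (abs_nonneg _) (le_csSup (S2bdd hMb 1) hmem)
    have h2 := hw2 1 one_pos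
    rw [Real.one_rpow] at h2
    linarith
  -- ‖h‖ ≤ B
  have hMB : |h x₀| ≤ B := by
    refine max_le_of_vanish hx₀s rfl hMb hm1 hp1 hB0 ?_
    intro v hv
    have := le_csSup (S2bdd hMb 1) hv
    have h2 := hw2 1 one_pos
    rw [Real.one_rpow] at h2
    linarith
  -- base case t > 2/3
  have hbase : ∀ t : ℝ, 0 < t → t ≤ 2 → 2/3 < t → sSup (S1set h t) ≤ Cconst β * t ^ β * B := by
    intro t ht ht2 ht23
    have h1 : sSup (S1set h t) ≤ 2 * B := le_trans (sSup_S1_le hMb hM0 t) (by linarith)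
    have ht23' : (2:ℝ)/3 ≤ t ^ β := by
      calc (2:ℝ)/3 = (2/3:ℝ) ^ (1:ℝ) := by rw [Real.rpow_one]
      _ ≤ (2/3:ℝ) ^ β := Real.rpow_le_rpow_of_exponent_ge (by norm_num) (by norm_num) hβ1.le
      _ ≤ t ^ β := Real.rpow_le_rpow (by norm_num) (by linarith) hβ0.le
    have h4 : (2:ℝ) ≤ Cconst β * t ^ β := by nlinarith
    have h5 := mul_le_mul_of_nonneg_right h4 hB0
    linarith
  -- induction on dyadic scale
  have hind : ∀ n : ℕ, ∀ t : ℝ, 0 < t → t ≤ 2 → 2/3 < 2^n * t →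
      sSup (S1set h t) ≤ Cconst β * t ^ β * B := by
    intro n
    induction n with
    | zero =>
      intro t ht h2 hb
      rw [pow_zero, one_mul] at hb
      exact hbase t ht h2 hb
    | succ n ih =>
      intro t ht h2 hb
      by_cases hc : 2/3 < t
      · exact hbase t ht h2 hc
      · push_neg at hc
        have hW2t0 : 0 ≤ B * t ^ β := mul_nonneg hB0 (Real.rpow_pos_of_pos ht β).le
        have h2t := marchaud_step hMb ht hc
          (fun v hv => le_trans (le_csSup (S2bdd hMb t) hv) (hw2 t ht)) hW2t0
        have hbig : 2/3 < 2^n * (2*t) := by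
          have he : (2:ℝ)^(n+1) * t = 2^n * (2*t) := by rw [pow_succ]; ring
          linarith [he.symm.le, he.le]
        have hih := ih (2*t) (by linarith) (by linarith) hbig
        have h2tpow : (2*t) ^ β = 2 ^ β * t ^ β := Real.mul_rpow (by norm_num) ht.le
        have h2split : (2:ℝ) ^ β = 2 * (2:ℝ) ^ (β-1) := by
          have he : (2:ℝ) ^ ((1:ℝ) + (β-1)) = 2^(1:ℝ) * 2^(β-1) := Real.rpow_add two_pos 1 (β-1)
          rw [show (1:ℝ) + (β-1) = β by ring, Real.rpow_one] at he
          exact he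
        have htβ : 0 ≤ t ^ β := (Real.rpow_pos_of_pos ht β).le
        have hmain : (1/2) * (Cconst β * (2*t)^β * B) + (1/2)*(B * t^β)
            = (Cconst β * 2^(β-1) + 1/2) * t^β * B := by
          rw [h2tpow, h2split]; ring
        have hstep : (Cconst β * 2^(β-1) + 1/2) * t^β * B ≤ Cconst β * t^β * B := by
          have := mul_nonneg htβ hB0
          nlinarith
        calc sSup (S1set h t) ≤ (1/2) * sSup (S1set h (2*t)) + (1/2) * (B * t ^ β) := h2t
          _ ≤ (1/2) * (Cconst β * (2*t)^β * B) + (1/2) * (B * t ^ β) := by linarith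
          _ = (Cconst β * 2^(β-1) + 1/2) * t^β * B := hmain
          _ ≤ Cconst β * t^β * B := hstep
  intro t ht ht2
  obtain ⟨n, hn⟩ := pow_unbounded_of_one_lt ((2/3)/t) one_lt_two
  have hb : 2/3 < 2^n * t := by
    rw [div_lt_iff₀ ht] at hn
    linarith
  exact hind n t ht ht2 hb

lemma cast_sub_one' (k : ℕ) : ((k : WithTop ℕ∞) - 1) = ((k - 1 : ℕ) : WithTop ℕ∞) := by
  norm_cast

lemma iter_sub_poly (f : ℝ → ℝ) (L : Polynomial ℝ) (ν : ℕ)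
    (hf : ContDiffOn ℝ ν f (Icc (-1:ℝ) 1)) :
    ∀ n, n ≤ ν → ∀ x ∈ Icc (-1:ℝ) 1,
      iteratedDerivWithin n (fun y => f y - L.eval y) (Icc (-1) 1) x
        = iteratedDerivWithin n f (Icc (-1) 1) x - (Polynomial.derivative^[n] L).eval x := by
  have hu : UniqueDiffOn ℝ (Icc (-1:ℝ) 1) := uniqueDiffOn_Icc (by norm_num)
  intro n
  induction n with
  | zero => intro _ x _; simp
  | succ n ih =>
    intro hn x hx
    have hn' : n ≤ ν := Nat.le_of_succ_le hn
    rw [iteratedDerivWithin_succ]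
    rw [derivWithin_congr (fun y hy => ih hn' y hy) (ih hn' x hx)]
    have hdF : DifferentiableWithinAt ℝ (iteratedDerivWithin n f (Icc (-1:ℝ) 1)) (Icc (-1:ℝ) 1) x :=
      hf.differentiableOn_iteratedDerivWithin (by exact_mod_cast hn) hu x hx
    have hdP : DifferentiableWithinAt ℝ (fun y => (Polynomial.derivative^[n] L).eval y)
        (Icc (-1:ℝ) 1) x :=
      (Polynomial.differentiable _).differentiableAt.differentiableWithinAt
    rw [derivWithin_fun_sub hdF hdP]
    congr 1
    · rw [iteratedDerivWithin_succ]
    · rw [(Polynomial.differentiable _).differentiableAt.derivWithin (hu x hx)]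
      rw [Polynomial.deriv, Function.iterate_succ_apply']

lemma affine_second_diff (q : Polynomial ℝ) (hq : q.natDegree ≤ 1) (x u : ℝ) :
    q.eval (x + u) - 2 * q.eval x + q.eval (x - u) = 0 := by
  have h2 : q.natDegree < 2 := by omega
  rw [Polynomial.eval_eq_sum_range' h2, Polynomial.eval_eq_sum_range' h2,
    Polynomial.eval_eq_sum_range' h2]
  simp [Finset.sum_range_succ]
  ring

lemma S1set_congr {f g : ℝ → ℝ} (t : ℝ) (hfg : ∀ y ∈ Icc (-1:ℝ) 1, f y = g y) :
    S1set f t = S1set g t := by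
  unfold S1set
  ext v
  constructor
  · rintro ⟨u, x, h1, h2, h3, h4, rfl⟩
    exact ⟨u, x, h1, h2, h3, h4, by
      rw [hfg _ ⟨by linarith, h4⟩, hfg _ ⟨h3, by linarith⟩]⟩
  · rintro ⟨u, x, h1, h2, h3, h4, rfl⟩
    exact ⟨u, x, h1, h2, h3, h4, by
      rw [hfg _ ⟨by linarith, h4⟩, hfg _ ⟨h3, by linarith⟩]⟩

lemma S2set_congr {f g : ℝ → ℝ} (t : ℝ)
    (hfg : ∀ x u : ℝ, f (x+u) - 2*f x + f (x-u) = g (x+u) - 2*g x + g (x-u)) :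
    S2set f t = S2set g t := by
  unfold S2set
  ext v
  constructor
  · rintro ⟨u, x, h1, h2, h3, h4, rfl⟩
    exact ⟨u, x, h1, h2, h3, h4, by rw [hfg x u]⟩
  · rintro ⟨u, x, h1, h2, h3, h4, rfl⟩
    exact ⟨u, x, h1, h2, h3, h4, by rw [hfg x u]⟩

/-- for non-integer `α > 0`, `ν = ⌈α⌉ − 1`, if `f ∈ C^ν[−1,1]` with
Zygmund-type seminorm `sup_t t^(ν−α) ω₂(f^(ν),t) ≤ B`, and `L` is a polynomial of
degree `≤ ν+1` whose `ν`-th derivative interpolates `f^(ν)` at `±1`, then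
`g = f − L` satisfies `ω₁(g^(ν), t; [−1,1]) ≤ c(α)·t^(α−ν)·B` for `0 < t ≤ 2`. -/
theorem stmt11 (α : ℝ) (hα : 0 < α) (hnotnat : ∀ n : ℕ, α ≠ n) :
    ∃ c : ℝ, 0 < c ∧ ∀ (f : ℝ → ℝ) (B : ℝ) (L : Polynomial ℝ),
      ContDiffOn ℝ (⌈α⌉₊ - 1) f (Icc (-1) 1) →
      (∀ t : ℝ, 0 < t →
        wmod 2 (iteratedDerivWithin (⌈α⌉₊ - 1) f (Icc (-1) 1)) t (-1) 1 ≤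
          B * t ^ (α - ((⌈α⌉₊ : ℝ) - 1))) →
      L.natDegree ≤ ⌈α⌉₊ →
      ((Polynomial.derivative^[⌈α⌉₊ - 1] L).eval (-1) =
        iteratedDerivWithin (⌈α⌉₊ - 1) f (Icc (-1) 1) (-1)) →
      ((Polynomial.derivative^[⌈α⌉₊ - 1] L).eval 1 =
        iteratedDerivWithin (⌈α⌉₊ - 1) f (Icc (-1) 1) 1) →
      ∀ t : ℝ, 0 < t → t ≤ 2 →
        wmod 1 (iteratedDerivWithin (⌈α⌉₊ - 1) (fun x => f x - L.eval x) (Icc (-1) 1))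
            t (-1) 1 ≤
          c * t ^ (α - ((⌈α⌉₊ : ℝ) - 1)) * B := by
  have hceil1 : 1 ≤ ⌈α⌉₊ := Nat.one_le_ceil_iff.mpr hα
  have hβ0 : 0 < α - ((⌈α⌉₊ : ℝ) - 1) := by
    have := Nat.ceil_lt_add_one hα.le
    linarith
  have hβ1 : α - ((⌈α⌉₊ : ℝ) - 1) < 1 := by
    have h1 : α ≤ (⌈α⌉₊:ℝ) := Nat.le_ceil α
    have h2 : α ≠ ((⌈α⌉₊:ℕ) : ℝ) := hnotnat _
    have h3 : α < (⌈α⌉₊:ℝ) := lt_of_le_of_ne h1 h2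
    linarith
  have hC3 : 3 ≤ Cconst (α - ((⌈α⌉₊ : ℝ) - 1)) := Cconst_ge_three hβ1
  refine ⟨Cconst (α - ((⌈α⌉₊ : ℝ) - 1)), by linarith, ?_⟩
  intro f B L hf hw2 hdeg hi1 hi2
  have hu : UniqueDiffOn ℝ (Icc (-1:ℝ) 1) := uniqueDiffOn_Icc (by norm_num)
  have hf' : ContDiffOn ℝ ((⌈α⌉₊ - 1 : ℕ) : ℕ∞) f (Icc (-1:ℝ) 1) := by
    rw [cast_sub_one'] at hf; exact_mod_cast hf
  have hkey : ∀ x ∈ Icc (-1:ℝ) 1,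
      iteratedDerivWithin (⌈α⌉₊ - 1) (fun y => f y - L.eval y) (Icc (-1) 1) x
        = iteratedDerivWithin (⌈α⌉₊ - 1) f (Icc (-1) 1) x
          - (Polynomial.derivative^[⌈α⌉₊ - 1] L).eval x :=
    fun x hx => iter_sub_poly f L (⌈α⌉₊ - 1) hf' (⌈α⌉₊ - 1) le_rfl x hx
  have hPdeg : (Polynomial.derivative^[⌈α⌉₊ - 1] L).natDegree ≤ 1 := by
    refine le_trans (Polynomial.natDegree_iterate_derivative L (⌈α⌉₊ - 1)) ?_
    omega
  have hP2 := affine_second_diff _ hPdeg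
  -- the shifted function
  set F : ℝ → ℝ := iteratedDerivWithin (⌈α⌉₊ - 1) f (Icc (-1) 1) with hFdef
  have hΔ : ∀ x u : ℝ,
      (fun y => F y - (Polynomial.derivative^[⌈α⌉₊ - 1] L).eval y) (x+u)
        - 2*(fun y => F y - (Polynomial.derivative^[⌈α⌉₊ - 1] L).eval y) x
        + (fun y => F y - (Polynomial.derivative^[⌈α⌉₊ - 1] L).eval y) (x-u)
      = F (x+u) - 2*F x + F (x-u) := by
    intro x u
    have := hP2 x u
    simp only
    linarith
  have hFcont : ContinuousOn F (Icc (-1:ℝ) 1) :=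
    hf'.continuousOn_iteratedDerivWithin le_rfl hu
  have hhcont : ContinuousOn (fun y => F y - (Polynomial.derivative^[⌈α⌉₊ - 1] L).eval y)
      (Icc (-1:ℝ) 1) :=
    hFcont.sub (Polynomial.continuous _).continuousOn
  have hm1 : (fun y => F y - (Polynomial.derivative^[⌈α⌉₊ - 1] L).eval y) (-1) = 0 := by
    simp only
    rw [hi1]; ring
  have hp1 : (fun y => F y - (Polynomial.derivative^[⌈α⌉₊ - 1] L).eval y) 1 = 0 := by
    simp only
    rw [hi2]; ring
  have hw2' : ∀ t : ℝ, 0 < t →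
      sSup (S2set (fun y => F y - (Polynomial.derivative^[⌈α⌉₊ - 1] L).eval y) t)
        ≤ B * t ^ (α - ((⌈α⌉₊ : ℝ) - 1)) := by
    intro t ht
    rw [S2set_congr t hΔ, ← wmod_two_eq]
    exact hw2 t ht
  have hmain := marchaud_main hβ0 hβ1 _ hhcont hm1 hp1 hw2'
  intro t ht ht2
  rw [wmod_one_eq, S1set_congr t (fun y hy => hkey y hy)]
  exact hmain t ht ht2
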